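/- For every integer k ≥ 2 the graph Q̂_k is path-minimal, and for all integers k, k' with 2 ≤ k < k' the ages of Q̂_k and Q̂_{k'} are incomparable with respect to inclusion (neither age is contained in the other). -/

import Mathlib

open SimpleGraph

/-- An induced path of length `n` in `G`: an injective sequence of `n+1` vertices,
adjacent exactly when consecutive. -/
def IsInducedPath {V : Type*} (G : SimpleGraph V) {n : ℕ} (x : Fin (n + 1) → V) : Prop :=
  Function.Injective x ∧ ∀ i j, G.Adj (x i) (x j) ↔ Nat.dist i.val j.val = 1

/-- `G` contains finite induced paths of unbounded length. -/
def HasUnboundedPaths {V : Type*} (G : SimpleGraph V) : Prop :=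
  ∀ n : ℕ, ∃ x : Fin (n + 1) → V, IsInducedPath G x

/-- `G` is path-minimal. -/
def PathMinimal {V : Type*} (G : SimpleGraph V) : Prop :=
  HasUnboundedPaths G ∧
    ∀ A : Set V, HasUnboundedPaths (G.induce A) → Nonempty (G ↪g G.induce A)

/-- The age of `G` is contained in the age of `H`. -/
def AgeSubset {V W : Type*} (G : SimpleGraph V) (H : SimpleGraph W) : Prop :=
  ∀ (n : ℕ) (F : SimpleGraph (Fin n)), Nonempty (F ↪g G) → Nonempty (F ↪g H)

/-- The age of `G` contains no infinite antichain for embeddability. -/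
def AgeWQO {V : Type*} (G : SimpleGraph V) : Prop :=
  ∀ f : ℕ → Σ n : ℕ, SimpleGraph (Fin n),
    (∀ i, Nonempty ((f i).2 ↪g G)) →
    ∃ i j, i ≠ j ∧ Nonempty ((f i).2 ↪g (f j).2)

/-- The set `A` carries an induced path of length `n` of `G` (covering all of `A`). -/
def IsPathOn {V : Type*} (G : SimpleGraph V) (A : Set V) (n : ℕ) : Prop :=
  ∃ x : Fin (n + 1) → V, Function.Injective x ∧ Set.range x = A ∧
    ∀ i j, G.Adj (x i) (x j) ↔ Nat.dist i.val j.val = 1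

/-- `G` embeds a direct sum of finite induced paths of unbounded length. -/
def EmbedsDirectSumOfPaths {V : Type*} (G : SimpleGraph V) : Prop :=
  ∃ A : ℕ → Set V, (∀ n, (A n).Finite) ∧
    (∀ m n, m ≠ n → Disjoint (A m) (A n)) ∧
    (∀ m n, m ≠ n → ∀ x ∈ A m, ∀ y ∈ A n, ¬ G.Adj x y) ∧
    ∀ n, ∃ m, n ≤ m ∧ IsPathOn G (A n) m

/-- `G` embeds a complete sum of finite induced paths of unbounded length. -/
def EmbedsCompleteSumOfPaths {V : Type*} (G : SimpleGraph V) : Prop :=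
  ∃ A : ℕ → Set V, (∀ n, (A n).Finite) ∧
    (∀ m n, m ≠ n → Disjoint (A m) (A n)) ∧
    (∀ m n, m ≠ n → ∀ x ∈ A m, ∀ y ∈ A n, G.Adj x y) ∧
    ∀ n, ∃ m, n ≤ m ∧ IsPathOn G (A n) m

/-- An isometric path of length `n` in `G`. -/
def IsIsometricPath {V : Type*} (G : SimpleGraph V) {n : ℕ} (x : Fin (n + 1) → V) : Prop :=
  (∀ i : Fin n, G.Adj (x i.castSucc) (x i.succ)) ∧
  ∀ i j, G.dist (x i) (x j) = Nat.dist i.val j.val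

/-- The set `A` carries an induced path of length `n` of `G` which is isometric in `G`. -/
def IsIsometricPathOn {V : Type*} (G : SimpleGraph V) (A : Set V) (n : ℕ) : Prop :=
  ∃ x : Fin (n + 1) → V, Function.Injective x ∧ Set.range x = A ∧
    (∀ i j, G.Adj (x i) (x j) ↔ Nat.dist i.val j.val = 1) ∧
    (∀ i j, G.dist (x i) (x j) = Nat.dist i.val j.val)

/-- The incomparability graph of a poset. -/
def incGraph (α : Type*) [PartialOrder α] : SimpleGraph α where
  Adj a b := ¬ a ≤ b ∧ ¬ b ≤ a
  symm := ⟨fun _ _ h => ⟨h.2, h.1⟩⟩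
  loopless := ⟨fun _ h => h.1 le_rfl⟩

/-- `w` is a (finite) factor of the infinite word `u`. -/
def IsFactor {A : Type*} (u : ℕ → A) (w : List A) : Prop :=
  ∃ p : ℕ, w = (List.range w.length).map fun i => u (p + i)

/-- `u` is uniformly recurrent. -/
def UniformlyRecurrent {A : Type*} (u : ℕ → A) : Prop :=
  ∀ n : ℕ, ∃ m : ℕ, ∀ v w : List A, IsFactor u v → IsFactor u w →
    v.length = n → w.length = m → v <:+: w

/-- The set of factors of `u` is inexhaustible. -/
def Inexhaustible {A : Type*} (u : ℕ → A) : Prop :=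
  ∀ v v' : List A, IsFactor u v → IsFactor u v' → ∃ w : List A, IsFactor u (v ++ w ++ v')

/-- The path on `n` vertices. -/
def pathG (n : ℕ) : SimpleGraph (Fin n) where
  Adj i j := Nat.dist i.val j.val = 1
  symm := ⟨fun i j h => by rwa [Nat.dist_comm]⟩
  loopless := ⟨fun i h => by simp [Nat.dist_self] at h⟩

/-- The graph `Ĝ_k` on `ℕ × ℕ`. -/
def Ghat (k : ℕ) : SimpleGraph (ℕ × ℕ) where
  Adj a b := (a.1 = b.1 ∧ Nat.dist a.2 b.2 = 1) ∨ (a.1 ≠ b.1 ∧ ¬ a.2 ≡ b.2 [MOD k])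
  symm := by
    constructor
    intro a b h
    rcases h with ⟨h1, h2⟩ | ⟨h1, h2⟩
    · exact Or.inl ⟨h1.symm, by rwa [Nat.dist_comm]⟩
    · exact Or.inr ⟨h1.symm, fun h => h2 h.symm⟩
  loopless := by
    constructor
    intro a h
    rcases h with ⟨_, h2⟩ | ⟨h1, _⟩
    · simp [Nat.dist_self] at h2
    · exact h1 rfl

/-- The vertex set of `Q̂_k`. -/
def Qset : Set (ℕ × ℕ) := {p : ℕ × ℕ | p.2 < p.1 + 5}

/-- The graph `Q̂_k`, induced by `Ĝ_k` on `Qset`. -/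
def Qhat (k : ℕ) : SimpleGraph Qset := (Ghat k).induce Qset

/-- `M` is a module (autonomous set) of `G`. -/
def IsModule {V : Type*} (G : SimpleGraph V) (M : Set V) : Prop :=
  ∀ v ∉ M, (∀ x ∈ M, G.Adj v x) ∨ (∀ x ∈ M, ¬ G.Adj v x)

/-- A trivial subset of a vertex set: empty, a singleton, or everything. -/
def IsTrivialSet {V : Type*} (M : Set V) : Prop :=
  M = ∅ ∨ (∃ v, M = {v}) ∨ M = Set.univ

/-- The graph `Ĝ_{u,⊕}` associated with the word `u : ℕ → Bool` and the Boolean sum. -/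
def GhatXor (u : ℕ → Bool) : SimpleGraph (ℕ × ℕ) where
  Adj a b := (a.1 = b.1 ∧ Nat.dist a.2 b.2 = 1) ∨ (a.1 ≠ b.1 ∧ u a.2 ≠ u b.2)
  symm := by
    constructor
    intro a b h
    rcases h with ⟨h1, h2⟩ | ⟨h1, h2⟩
    · exact Or.inl ⟨h1.symm, by rwa [Nat.dist_comm]⟩
    · exact Or.inr ⟨h1.symm, h2.symm⟩
  loopless := by
    constructor
    intro a h
    rcases h with ⟨_, h2⟩ | ⟨h1, _⟩
    · simp [Nat.dist_self] at h2
    · exact h1 rfl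

/-- The graph `Ĝ_{u,π₂}` associated with the word `u : ℕ → Bool` and the second projection. -/
def GhatPi2 (u : ℕ → Bool) : SimpleGraph (ℕ × ℕ) where
  Adj a b := (a.1 = b.1 ∧ Nat.dist a.2 b.2 = 1) ∨
    (a.1 < b.1 ∧ u b.2 = true) ∨ (b.1 < a.1 ∧ u a.2 = true)
  symm := by
    constructor
    intro a b h
    rcases h with ⟨h1, h2⟩ | ⟨h1, h2⟩ | ⟨h1, h2⟩
    · exact Or.inl ⟨h1.symm, by rwa [Nat.dist_comm]⟩
    · exact Or.inr (Or.inr ⟨h1, h2⟩)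
    · exact Or.inr (Or.inl ⟨h1, h2⟩)
  loopless := by
    constructor
    intro a h
    rcases h with ⟨_, h2⟩ | ⟨h1, _⟩ | ⟨h1, _⟩
    · simp [Nat.dist_self] at h2
    · exact lt_irrefl _ h1
    · exact lt_irrefl _ h1

/-- `u` has a constant factor of length `m`. -/
def HasConstFactor (u : ℕ → Bool) (m : ℕ) : Prop :=
  ∃ p : ℕ, ∀ i < m, u (p + i) = u p


-- ===== auxiliary lemmas =====

lemma modeq_not_dist_one {k a b : ℕ} (hk : 2 ≤ k) (h : a ≡ b [MOD k]) :
    Nat.dist a b ≠ 1 := by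
  intro hd
  have hd' : b = a + 1 ∨ a = b + 1 := by simp [Nat.dist] at hd; omega
  rcases hd' with hd' | hd'
  · have := (Nat.modEq_iff_dvd' (by omega : a ≤ b)).mp h
    rw [hd'] at this; simp at this; omega
  · have := (Nat.modEq_iff_dvd' (by omega : b ≤ a)).mp h.symm
    rw [hd'] at this; simp at this; omega

lemma path_structure {k n : ℕ} (hk : 2 ≤ k) (hn : 10 ≤ n) (C Y : ℕ → ℕ)
    (hinj : ∀ i ≤ n, ∀ j ≤ n, C i = C j → Y i = Y j → i = j)
    (hadj : ∀ i ≤ n, ∀ j ≤ n, ((C i = C j ∧ Nat.dist (Y i) (Y j) = 1) ∨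
        (C i ≠ C j ∧ ¬ Y i ≡ Y j [MOD k])) ↔ Nat.dist i j = 1) :
    (∀ i ≤ n, C i = C 0) ∧ ((∀ i ≤ n, Y i = Y 0 + i) ∨ (∀ i ≤ n, Y i + i = Y 0)) := by
  have hcons : ∀ m, m + 1 ≤ n → C m = C (m+1) := by
    intro m hm
    by_contra hne
    have hd1 : Nat.dist m (m+1) = 1 := by simp [Nat.dist]
    have hadjm := (hadj m (by omega) (m+1) (by omega)).mpr hd1
    have hmod : ¬ Y m ≡ Y (m+1) [MOD k] := by
      rcases hadjm with ⟨h1, _⟩ | ⟨_, h2⟩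
      · exact absurd h1 hne
      · exact h2
    have far : ∀ j ≤ n, (j + 2 ≤ m ∨ m + 3 ≤ j) →
        (C j = C m ∧ Y j ≡ Y (m+1) [MOD k]) ∨ (C j = C (m+1) ∧ Y j ≡ Y m [MOD k]) := by
      intro j hj hfar
      have na1 : ¬ ((C j = C m ∧ Nat.dist (Y j) (Y m) = 1) ∨
          (C j ≠ C m ∧ ¬ Y j ≡ Y m [MOD k])) := by
        intro h
        have := (hadj j hj m (by omega)).mp h
        simp [Nat.dist] at this; omega
      have na2 : ¬ ((C j = C (m+1) ∧ Nat.dist (Y j) (Y (m+1)) = 1) ∨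
          (C j ≠ C (m+1) ∧ ¬ Y j ≡ Y (m+1) [MOD k])) := by
        intro h
        have := (hadj j hj (m+1) (by omega)).mp h
        simp [Nat.dist] at this; omega
      push_neg at na1 na2
      by_cases hc : C j = C m
      · refine Or.inl ⟨hc, ?_⟩
        have : C j ≠ C (m+1) := hc ▸ hne
        exact na2.2 this
      · have h1 : Y j ≡ Y m [MOD k] := na1.2 hc
        by_cases hc2 : C j = C (m+1)
        · exact Or.inr ⟨hc2, h1⟩
        · have h2 : Y j ≡ Y (m+1) [MOD k] := na2.2 hc2
          exact absurd (h1.symm.trans h2) hmod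
    obtain ⟨j0, hj3, hfar_t⟩ : ∃ j0, j0 + 3 ≤ n ∧
        ∀ t ≤ 3, j0 + t + 2 ≤ m ∨ m + 3 ≤ j0 + t := by
      by_cases h5 : 5 ≤ m
      · exact ⟨0, by omega, fun t ht => Or.inl (by omega)⟩
      · exact ⟨m+3, by omega, fun t ht => Or.inr (by omega)⟩
    have e : ∀ t ≤ 3, (C (j0+t) = C m ∧ Y (j0+t) ≡ Y (m+1) [MOD k]) ∨
        (C (j0+t) = C (m+1) ∧ Y (j0+t) ≡ Y m [MOD k]) :=
      fun t ht => far _ (by omega) (hfar_t t ht)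
    have alt : ∀ t, t + 1 ≤ 3 → C (j0+t) ≠ C (j0+t+1) := by
      intro t ht heq
      have hd : Nat.dist (j0+t) (j0+t+1) = 1 := by simp [Nat.dist]
      have hadjt := (hadj (j0+t) (by omega) (j0+t+1) (by omega)).mpr hd
      have dY : Nat.dist (Y (j0+t)) (Y (j0+t+1)) = 1 := by
        rcases hadjt with ⟨_, h⟩ | ⟨h, _⟩
        · exact h
        · exact absurd heq h
      have hmodeq : Y (j0+t) ≡ Y (j0+t+1) [MOD k] := by
        rcases e t (by omega) with ⟨hc1, hy1⟩ | ⟨hc1, hy1⟩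
        · rcases e (t+1) (by omega) with ⟨hc2, hy2⟩ | ⟨hc2, hy2⟩
          · exact hy1.trans hy2.symm
          · exact absurd (hc1.symm.trans (heq.trans hc2)) hne
        · rcases e (t+1) (by omega) with ⟨hc2, hy2⟩ | ⟨hc2, hy2⟩
          · exact absurd (hc2.symm.trans (heq.symm.trans hc1)) hne
          · exact hy1.trans hy2.symm
      exact modeq_not_dist_one hk hmodeq dY
    -- columns alternate; derive residue contradiction between j0 and j0+3
    have hd03 : Nat.dist (j0) (j0+3) ≠ 1 := by simp [Nat.dist]
    have na03 : ¬ ((C j0 = C (j0+3) ∧ Nat.dist (Y j0) (Y (j0+3)) = 1) ∨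
        (C j0 ≠ C (j0+3) ∧ ¬ Y j0 ≡ Y (j0+3) [MOD k])) := by
      intro h
      exact hd03 ((hadj j0 (by omega) (j0+3) (by omega)).mp h)
    push_neg at na03
    rcases e 0 (by omega) with ⟨hc0, hy0⟩ | ⟨hc0, hy0⟩ <;> simp only [Nat.add_zero] at hc0 hy0
    · have hc1 : C (j0+1) = C (m+1) := by
        rcases e 1 (by omega) with ⟨h, _⟩ | ⟨h, _⟩
        · exact absurd (hc0.trans h.symm) (by simpa using alt 0 (by omega))
        · exact h
      have hc2 : C (j0+2) = C m := by
        rcases e 2 (by omega) with ⟨h, _⟩ | ⟨h, _⟩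
        · exact h
        · exact absurd (hc1.trans h.symm) (by simpa [show j0+1+1 = j0+2 by omega] using alt 1 (by omega))
      have hc3 : C (j0+3) = C (m+1) ∧ Y (j0+3) ≡ Y m [MOD k] := by
        rcases e 3 (by omega) with ⟨h, hy⟩ | h
        · exact absurd (hc2.trans h.symm) (by simpa [show j0+2+1 = j0+3 by omega] using alt 2 (by omega))
        · exact h
      have hcne : C j0 ≠ C (j0+3) := by rw [hc0, hc3.1]; exact hne
      have := na03.2 hcne
      exact hmod ((hy0.symm.trans this).trans hc3.2).symm
    · have hc1 : C (j0+1) = C m := by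
        rcases e 1 (by omega) with ⟨h, _⟩ | ⟨h, _⟩
        · exact h
        · exact absurd (hc0.trans h.symm) (by simpa using alt 0 (by omega))
      have hc2 : C (j0+2) = C (m+1) := by
        rcases e 2 (by omega) with ⟨h, _⟩ | ⟨h, _⟩
        · exact absurd (hc1.trans h.symm) (by simpa [show j0+1+1 = j0+2 by omega] using alt 1 (by omega))
        · exact h
      have hc3 : C (j0+3) = C m ∧ Y (j0+3) ≡ Y (m+1) [MOD k] := by
        rcases e 3 (by omega) with h | ⟨h, hy⟩
        · exact h
        · exact absurd (hc2.trans h.symm) (by simpa [show j0+2+1 = j0+3 by omega] using alt 2 (by omega))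
      have hcne : C j0 ≠ C (j0+3) := by rw [hc0, hc3.1]; exact fun h => hne h.symm
      have := na03.2 hcne
      exact hmod ((hy0.symm.trans this).trans hc3.2)
  -- columns constant
  have hC : ∀ i ≤ n, C i = C 0 := by
    intro i hi
    induction i with
    | zero => rfl
    | succ m ih => exact (hcons m hi).symm.trans (ih (by omega))
  refine ⟨hC, ?_⟩
  -- steps
  have hstep : ∀ m, m + 1 ≤ n → Nat.dist (Y m) (Y (m+1)) = 1 := by
    intro m hm
    have hd1 : Nat.dist m (m+1) = 1 := by simp [Nat.dist]
    rcases (hadj m (by omega) (m+1) (by omega)).mpr hd1 with ⟨_, h⟩ | ⟨h, _⟩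
    · exact h
    · exact absurd ((hC m (by omega)).trans (hC (m+1) hm).symm) h
  have hYinj : ∀ i ≤ n, ∀ j ≤ n, Y i = Y j → i = j := by
    intro i hi j hj hY
    exact hinj i hi j hj ((hC i hi).trans (hC j hj).symm) hY
  have h10 : Nat.dist (Y 0) (Y 1) = 1 := hstep 0 (by omega)
  have h10' : Y 1 = Y 0 + 1 ∨ Y 0 = Y 1 + 1 := by simp [Nat.dist] at h10; omega
  rcases h10' with hup | hdn
  · left
    have up : ∀ m, m + 1 ≤ n → Y (m+1) = Y m + 1 := by
      intro m
      induction m with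
      | zero => intro _; exact hup
      | succ m ih =>
        intro hm
        show Y (m+2) = Y (m+1) + 1
        have h1 := ih (by omega)
        have h2 := hstep (m+1) hm
        simp only [show m+1+1 = m+2 from rfl] at h2
        have h3 : Y (m+2) = Y (m+1) + 1 ∨ Y (m+1) = Y (m+2) + 1 := by
          simp [Nat.dist] at h2; omega
        rcases h3 with h3 | h3
        · exact h3
        · have : Y (m+2) = Y m := by omega
          have := hYinj (m+2) (by omega) m (by omega) this
          omega
    intro i hi
    induction i with
    | zero => simp
    | succ m ih =>
      have h1 := up m hi
      have h2 := ih (by omega)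
      omega
  · right
    have dn : ∀ m, m + 1 ≤ n → Y m = Y (m+1) + 1 := by
      intro m
      induction m with
      | zero => intro _; exact hdn
      | succ m ih =>
        intro hm
        show Y (m+1) = Y (m+2) + 1
        have h1 := ih (by omega)
        have h2 := hstep (m+1) hm
        simp only [show m+1+1 = m+2 from rfl] at h2
        have h3 : Y (m+2) = Y (m+1) + 1 ∨ Y (m+1) = Y (m+2) + 1 := by
          simp [Nat.dist] at h2; omega
        rcases h3 with h3 | h3
        · have : Y (m+2) = Y m := by omega
          have := hYinj (m+2) (by omega) m (by omega) this
          omega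
        · omega
    intro i hi
    induction i with
    | zero => simp
    | succ m ih =>
      have h1 := dn m hi
      have h2 := ih (by omega)
      omega

lemma ghat_adj (k : ℕ) (a b : ℕ × ℕ) : (Ghat k).Adj a b ↔
    ((a.1 = b.1 ∧ Nat.dist a.2 b.2 = 1) ∨ (a.1 ≠ b.1 ∧ ¬ a.2 ≡ b.2 [MOD k])) := Iff.rfl

lemma qhat_adj (k : ℕ) (a b : ↥Qset) : (Qhat k).Adj a b ↔ (Ghat k).Adj a.val b.val := Iff.rfl

lemma path_structure_fin {k n : ℕ} (hk : 2 ≤ k) (hn : 10 ≤ n) (p : Fin (n+1) → ℕ × ℕ)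
    (hinj : Function.Injective p)
    (hadj : ∀ i j, (Ghat k).Adj (p i) (p j) ↔ Nat.dist i.val j.val = 1) :
    (∀ i : Fin (n+1), (p i).1 = (p 0).1) ∧
    ((∀ i : Fin (n+1), (p i).2 = (p 0).2 + i.val) ∨
     (∀ i : Fin (n+1), (p i).2 + i.val = (p 0).2)) := by
  set C : ℕ → ℕ := fun m => (p ⟨min m n, by omega⟩).1 with hCdef
  set Y : ℕ → ℕ := fun m => (p ⟨min m n, by omega⟩).2 with hYdef
  have hfin : ∀ (i : Fin (n+1)), (⟨min i.val n, by omega⟩ : Fin (n+1)) = i := by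
    intro i; ext; simp; omega
  have hCi : ∀ i : Fin (n+1), C i.val = (p i).1 := by
    intro i; simp only [hCdef]; rw [hfin i]
  have hYi : ∀ i : Fin (n+1), Y i.val = (p i).2 := by
    intro i; simp only [hYdef]; rw [hfin i]
  obtain ⟨hC, hY⟩ := path_structure (k := k) hk hn C Y
    (by
      intro i hi j hj h1 h2
      have : (⟨min i n, by omega⟩ : Fin (n+1)) = ⟨min j n, by omega⟩ :=
        hinj (Prod.ext h1 h2)
      have := Fin.mk.injEq _ _ _ _ ▸ this
      omega)
    (by
      intro i hi j hj
      have := hadj ⟨i, by omega⟩ ⟨j, by omega⟩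
      rw [ghat_adj] at this
      simp only [← hCi, ← hYi] at this
      simpa using this)
  constructor
  · intro i
    have h1 := hC i.val (by omega)
    have h2 := hC (0 : Fin (n+1)).val (by omega)
    rw [hCi i, hCi 0] at *
    rw [h1, ← h2]
  · rcases hY with h | h
    · left; intro i
      have := h i.val (by omega)
      rwa [hYi i, show Y 0 = (p 0).2 from hYi 0] at this
    · right; intro i
      have := h i.val (by omega)
      rwa [hYi i, show Y 0 = (p 0).2 from hYi 0] at this

lemma hasUnboundedPaths_Qhat (k : ℕ) (hk : 2 ≤ k) : HasUnboundedPaths (Qhat k) := by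
  intro n
  refine ⟨fun i => ⟨(n, i.val), by simp [Qset]; omega⟩, ?_, ?_⟩
  · intro i j h
    simp only [Subtype.mk.injEq, Prod.mk.injEq] at h
    exact Fin.ext h.2
  · intro i j
    rw [qhat_adj, ghat_adj]
    simp

-- Given unbounded paths on A, produce long intervals in a single column above any bound,
-- starting at a multiple of k.
lemma intervals_of_unbounded {k : ℕ} (hk : 2 ≤ k) (A : Set ↥Qset)
    (hU : HasUnboundedPaths ((Qhat k).induce A)) :
    ∀ len bound : ℕ, ∃ c a : ℕ, bound < c ∧ a % k = 0 ∧
      ∀ i ≤ len, ∃ h : ((c, a + i) : ℕ × ℕ) ∈ Qset, (⟨(c, a+i), h⟩ : ↥Qset) ∈ A := by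
  intro len bound
  set n := len + k + bound + 10 with hn
  obtain ⟨x, hxinj, hxadj⟩ := hU n
  set p : Fin (n+1) → ℕ × ℕ := fun i => ((x i : ↥Qset) : ℕ × ℕ) with hp
  have hpinj : Function.Injective p := by
    intro i j h
    exact hxinj (Subtype.ext (Subtype.ext h))
  have hpadj : ∀ i j, (Ghat k).Adj (p i) (p j) ↔ Nat.dist i.val j.val = 1 := by
    intro i j
    rw [← hxadj i j]
    rfl
  obtain ⟨hC, hY⟩ := path_structure_fin hk (by omega) p hpinj hpadj
  set c := (p 0).1 with hc
  -- membership of interval points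
  have hmem : ∀ i : Fin (n+1), ∃ h : p i ∈ Qset, (⟨p i, h⟩ : ↥Qset) ∈ A := by
    intro i
    refine ⟨(x i : ↥Qset).2, ?_⟩
    have : (⟨p i, (x i : ↥Qset).2⟩ : ↥Qset) = (x i : ↥Qset) := Subtype.ext rfl
    rw [this]
    exact (x i).2
  -- produce base interval a0 with ∀ i ≤ n, (c, a0 + i) has the property
  have hbase : ∃ a0 : ℕ, ∀ i ≤ n, ∃ h : ((c, a0 + i) : ℕ × ℕ) ∈ Qset,
      (⟨(c, a0 + i), h⟩ : ↥Qset) ∈ A := by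
    rcases hY with h | h
    · refine ⟨(p 0).2, ?_⟩
      intro i hi
      have h1 := h ⟨i, by omega⟩
      have h2 := hC ⟨i, by omega⟩
      have : ((c, (p 0).2 + i) : ℕ × ℕ) = p ⟨i, by omega⟩ := by
        rw [hc]
        exact Prod.ext h2.symm h1.symm
      rw [this]
      exact hmem _
    · refine ⟨(p ⟨n, by omega⟩).2, ?_⟩
      intro i hi
      have h1 := h ⟨n - i, by omega⟩
      have h2 := h ⟨n, by omega⟩
      have h3 := hC ⟨n - i, by omega⟩
      have : ((c, (p ⟨n, by omega⟩).2 + i) : ℕ × ℕ) = p ⟨n - i, by omega⟩ := by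
        rw [hc]
        refine Prod.ext h3.symm ?_
        simp only at h1 h2
        omega
      rw [this]
      exact hmem _
  obtain ⟨a0, ha0⟩ := hbase
  -- c is large
  have hclarge : bound < c := by
    obtain ⟨hq, -⟩ := ha0 n le_rfl
    have : a0 + n < c + 5 := hq
    omega
  -- shift to multiple of k
  have hk0 : 0 < k := by omega
  set s := (k - a0 % k) % k with hs
  have hslt : s < k := Nat.mod_lt _ hk0
  have hmod0 : (a0 + s) % k = 0 := by
    rcases Nat.eq_zero_or_pos (a0 % k) with h | h
    · have : s = 0 := by rw [hs, h, Nat.sub_zero, Nat.mod_self]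
      rw [this, Nat.add_zero]; exact h
    · have hlt : a0 % k < k := Nat.mod_lt _ hk0
      have hs' : s = k - a0 % k := by rw [hs]; exact Nat.mod_eq_of_lt (by omega)
      have hsum : a0 % k + s = k := by omega
      rw [Nat.add_mod]
      have hss : s % k = s := Nat.mod_eq_of_lt hslt
      rw [hss, hsum, Nat.mod_self]
  refine ⟨c, a0 + s, hclarge, hmod0, ?_⟩
  intro i hi
  have : a0 + s + i = a0 + (s + i) := by omega
  rw [this]
  exact ha0 (s + i) (by omega)

lemma embed_of_intervals {k : ℕ} (hk : 2 ≤ k) (A : Set ↥Qset)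
    (hI : ∀ len bound : ℕ, ∃ c a : ℕ, bound < c ∧ a % k = 0 ∧
      ∀ i ≤ len, ∃ h : ((c, a + i) : ℕ × ℕ) ∈ Qset, (⟨(c, a+i), h⟩ : ↥Qset) ∈ A) :
    Nonempty (Qhat k ↪g (Qhat k).induce A) := by
  choose c a hbig hmod hmem using hI
  -- recursively defined columns/offsets
  let g : ℕ → ℕ × ℕ := fun x =>
    Nat.rec (motive := fun _ => ℕ × ℕ) (c 4 0, a 4 0)
      (fun x prev => (c (x + 5) prev.1, a (x + 5) prev.1)) x
  have hg0 : g 0 = (c 4 0, a 4 0) := rfl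
  have hgs : ∀ x, g (x + 1) = (c (x + 5) (g x).1, a (x + 5) (g x).1) := fun x => rfl
  have hginc : ∀ x, (g x).1 < (g (x + 1)).1 := by
    intro x
    rw [hgs x]
    exact hbig (x + 5) (g x).1
  have hgmono : StrictMono (fun x => (g x).1) := strictMono_nat_of_lt_succ hginc
  have hgmod : ∀ x, (g x).2 % k = 0 := by
    intro x
    cases x with
    | zero => exact hmod 4 0
    | succ m => rw [hgs m]; exact hmod (m + 5) (g m).1
  have hgmem : ∀ x, ∀ i ≤ x + 4, ∃ h : (((g x).1, (g x).2 + i) : ℕ × ℕ) ∈ Qset,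
      (⟨((g x).1, (g x).2 + i), h⟩ : ↥Qset) ∈ A := by
    intro x
    cases x with
    | zero => exact hmem 4 0
    | succ m =>
      intro i hi
      rw [hgs m]
      exact hmem (m + 5) (g m).1 i (by omega)
  -- the embedding
  have hQmem : ∀ v : ↥Qset, (((g v.val.1).1, (g v.val.1).2 + v.val.2) : ℕ × ℕ) ∈ Qset := by
    intro v
    exact (hgmem v.val.1 v.val.2 (by have := v.2; simp only [Qset, Set.mem_setOf_eq] at this; omega)).choose
  have hAmem : ∀ v : ↥Qset,
      (⟨((g v.val.1).1, (g v.val.1).2 + v.val.2), hQmem v⟩ : ↥Qset) ∈ A := by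
    intro v
    exact (hgmem v.val.1 v.val.2 (by have := v.2; simp only [Qset, Set.mem_setOf_eq] at this; omega)).choose_spec
  have key : ∀ u v : ↥Qset,
      ((Ghat k).Adj ((g u.val.1).1, (g u.val.1).2 + u.val.2)
        ((g v.val.1).1, (g v.val.1).2 + v.val.2) ↔ (Ghat k).Adj u.val v.val) := by
    intro u v
    rw [ghat_adj, ghat_adj]
    by_cases hc : u.val.1 = v.val.1
    · -- same column
      constructor
      · rintro (⟨-, hd⟩ | ⟨hne, -⟩)
        · refine Or.inl ⟨hc, ?_⟩
          rw [hc] at hd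
          simp only [Nat.dist] at hd ⊢
          omega
        · exact absurd (congrArg (fun x => (g x).1) hc) hne
      · rintro (⟨-, hd⟩ | ⟨hne, -⟩)
        · refine Or.inl ⟨congrArg (fun x => (g x).1) hc, ?_⟩
          rw [hc]
          simp only [Nat.dist] at hd ⊢
          omega
        · exact absurd hc hne
    · -- different columns
      have hgc : (g u.val.1).1 ≠ (g v.val.1).1 := fun h => hc (hgmono.injective h)
      have hmeq : ((g u.val.1).2 + u.val.2 ≡ (g v.val.1).2 + v.val.2 [MOD k]) ↔
          (u.val.2 ≡ v.val.2 [MOD k]) := by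
        have m1 : (g u.val.1).2 ≡ 0 [MOD k] := by
          unfold Nat.ModEq; rw [hgmod, Nat.zero_mod]
        have m2 : (g v.val.1).2 ≡ 0 [MOD k] := by
          unfold Nat.ModEq; rw [hgmod, Nat.zero_mod]
        constructor
        · intro h
          have := ((m1.add_right _).symm.trans h).trans (m2.add_right _)
          simpa using this
        · intro h
          exact ((m1.add_right _).trans (by simpa using h.add_left 0)).trans
            (m2.add_right _).symm
      constructor
      · rintro (⟨he, -⟩ | ⟨-, hm⟩)
        · exact absurd he hgc
        · exact Or.inr ⟨hc, fun h => hm (hmeq.mpr h)⟩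
      · rintro (⟨he, -⟩ | ⟨-, hm⟩)
        · exact absurd he hc
        · exact Or.inr ⟨hgc, fun h => hm (hmeq.mp h)⟩
  refine ⟨⟨⟨fun v => ⟨⟨((g v.val.1).1, (g v.val.1).2 + v.val.2), hQmem v⟩, hAmem v⟩, ?_⟩, ?_⟩⟩
  · -- injective
    intro u v h
    simp only [Subtype.mk.injEq, Prod.mk.injEq] at h
    have h1 : u.val.1 = v.val.1 := hgmono.injective h.1
    have h2 : u.val.2 = v.val.2 := by rw [h1] at h; omega
    exact Subtype.ext (Prod.ext h1 h2)
  · -- map_rel_iff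
    intro u v
    exact key u v

/-- witness 1: complete graph on k+1 vertices -/
lemma top_embeds {k k' : ℕ} (hk : 2 ≤ k) (hkk : k < k') :
    Nonempty ((⊤ : SimpleGraph (Fin (k+1))) ↪g Qhat k') := by
  refine ⟨⟨⟨fun i => ⟨(k' + i.val, i.val), by simp [Qset]; omega⟩, ?_⟩, ?_⟩⟩
  · intro i j h
    simp only [Subtype.mk.injEq, Prod.mk.injEq] at h
    exact Fin.ext h.2
  · intro i j
    rw [qhat_adj, ghat_adj]
    simp only [top_adj]
    constructor
    · rintro (⟨-, h2⟩ | ⟨h1, -⟩)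
      · intro h; rw [h] at h2; simp [Nat.dist_self] at h2
      · intro h; rw [h] at h1; exact h1 rfl
    · intro hne
      refine Or.inr ⟨fun h => hne (Fin.ext (by have h' : k' + i.val = k' + j.val := h; omega)), fun h => ?_⟩
      have h' : i.val % k' = j.val % k' := h
      have h1 : i.val % k' = i.val := Nat.mod_eq_of_lt (by omega)
      have h2 : j.val % k' = j.val := Nat.mod_eq_of_lt (by omega)
      rw [h1, h2] at h'
      exact hne (Fin.ext h')

lemma top_not_embeds {k : ℕ} (hk : 2 ≤ k) :
    ¬ Nonempty ((⊤ : SimpleGraph (Fin (k+1))) ↪g Qhat k) := by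
  rintro ⟨f⟩
  have hkpos : 0 < k := by omega
  obtain ⟨i, j, hne, heq⟩ := Fintype.exists_ne_map_eq_of_card_lt
    (fun i : Fin (k+1) => (⟨(f i).val.2 % k, Nat.mod_lt _ hkpos⟩ : Fin k))
    (by simp)
  have hmodeq : (f i).val.2 ≡ (f j).val.2 [MOD k] := by
    simpa [Nat.ModEq] using congrArg Fin.val heq
  have hadj : (Qhat k).Adj (f i) (f j) := f.map_rel_iff.mpr (by simpa using hne)
  rw [qhat_adj, ghat_adj] at hadj
  rcases hadj with ⟨-, hd⟩ | ⟨-, hm⟩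
  · exact modeq_not_dist_one hk hmodeq hd
  · exact hm hmodeq

/-- Path of length 2k+10 with an apex adjacent to exactly the non-multiples of k. -/
def apexPath (k : ℕ) : SimpleGraph (Fin (2*k+12)) where
  Adj i j := (i.val ≤ 2*k+10 ∧ j.val ≤ 2*k+10 ∧ Nat.dist i.val j.val = 1)
    ∨ (i.val = 2*k+11 ∧ j.val ≤ 2*k+10 ∧ ¬ k ∣ j.val)
    ∨ (j.val = 2*k+11 ∧ i.val ≤ 2*k+10 ∧ ¬ k ∣ i.val)
  symm := by
    constructor
    intro i j h
    rcases h with ⟨h1, h2, h3⟩ | h | h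
    · exact Or.inl ⟨h2, h1, by rwa [Nat.dist_comm]⟩
    · exact Or.inr (Or.inr h)
    · exact Or.inr (Or.inl h)
  loopless := by
    constructor
    intro i h
    rcases h with ⟨-, -, h3⟩ | ⟨h1, h2, -⟩ | ⟨h1, h2, -⟩
    · rw [Nat.dist_self] at h3; omega
    · omega
    · omega

lemma apexPath_adj (k : ℕ) (i j : Fin (2*k+12)) : (apexPath k).Adj i j ↔
    ((i.val ≤ 2*k+10 ∧ j.val ≤ 2*k+10 ∧ Nat.dist i.val j.val = 1)
    ∨ (i.val = 2*k+11 ∧ j.val ≤ 2*k+10 ∧ ¬ k ∣ j.val)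
    ∨ (j.val = 2*k+11 ∧ i.val ≤ 2*k+10 ∧ ¬ k ∣ i.val)) := Iff.rfl

lemma apexPath_embeds {k : ℕ} (hk : 2 ≤ k) :
    Nonempty (apexPath k ↪g Qhat k) := by
  set L := 2*k+10 with hL
  set f : Fin (2*k+12) → ↥Qset := fun i => if h : i.val ≤ L then ⟨(L, i.val), by simp [Qset]; omega⟩
      else ⟨(L+1, 0), by simp [Qset]⟩ with hf
  have hfi : ∀ (i : Fin (2*k+12)) (h : i.val ≤ L), f i = ⟨(L, i.val), by simp [Qset]; omega⟩ := by
    intro i h; simp only [hf]; rw [dif_pos h]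
  have hfo : ∀ (i : Fin (2*k+12)) (h : ¬ i.val ≤ L), f i = ⟨(L+1, 0), by simp [Qset]⟩ := by
    intro i h; simp only [hf]; rw [dif_neg h]
  have hinj : Function.Injective f := by
    intro i j h
    by_cases hi : i.val ≤ L <;> by_cases hj : j.val ≤ L
    · rw [hfi i hi, hfi j hj] at h
      simp only [Subtype.mk.injEq, Prod.mk.injEq] at h
      exact Fin.ext h.2
    · rw [hfi i hi, hfo j hj] at h
      have h2 : L = L + 1 := congrArg (fun x : ↥Qset => x.val.1) h
      omega
    · rw [hfo i hi, hfi j hj] at h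
      have h2 : L + 1 = L := congrArg (fun x : ↥Qset => x.val.1) h
      omega
    · have := i.isLt; have := j.isLt; exact Fin.ext (by omega)
  have key : ∀ i j, (Qhat k).Adj (f i) (f j) ↔ (apexPath k).Adj i j := by
    intro i j
    have hi' := i.isLt; have hj' := j.isLt
    by_cases hi : i.val ≤ L <;> by_cases hj : j.val ≤ L
    · rw [hfi i hi, hfi j hj]
      rw [qhat_adj, ghat_adj, apexPath_adj]
      constructor
      · rintro (⟨-, hd⟩ | ⟨hne, -⟩)
        · exact Or.inl ⟨hi, hj, hd⟩
        · exact absurd rfl hne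
      · rintro (⟨-, -, hd⟩ | ⟨h1, -, -⟩ | ⟨h1, -, -⟩)
        · exact Or.inl ⟨rfl, hd⟩
        · omega
        · omega
    · rw [hfi i hi, hfo j hj]
      rw [qhat_adj, ghat_adj, apexPath_adj]
      have hj2 : j.val = 2*k+11 := by omega
      constructor
      · rintro (⟨h1, -⟩ | ⟨-, hm⟩)
        · simp at h1
        · refine Or.inr (Or.inr ⟨hj2, hi, fun hdvd => hm ?_⟩)
          show i.val % k = 0 % k
          simp [Nat.eq_zero_of_dvd_of_lt, Nat.mod_eq_zero_of_dvd hdvd]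
      · rintro (⟨-, h2, -⟩ | ⟨h1, -, -⟩ | ⟨-, -, hnd⟩)
        · omega
        · omega
        · refine Or.inr ⟨by simp, fun hm => hnd ?_⟩
          have : i.val % k = 0 % k := hm
          simpa [Nat.dvd_iff_mod_eq_zero] using this
    · -- symmetric
      rw [hfo i hi, hfi j hj]
      rw [qhat_adj, ghat_adj, apexPath_adj]
      have hi2 : i.val = 2*k+11 := by omega
      constructor
      · rintro (⟨h1, -⟩ | ⟨-, hm⟩)
        · simp at h1
        · refine Or.inr (Or.inl ⟨hi2, hj, fun hdvd => hm ?_⟩)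
          show 0 % k = j.val % k
          simp [Nat.mod_eq_zero_of_dvd hdvd]
      · rintro (⟨h1, -, -⟩ | ⟨-, -, hnd⟩ | ⟨h1, -, -⟩)
        · omega
        · refine Or.inr ⟨by simp, fun hm => hnd ?_⟩
          have : 0 % k = j.val % k := hm
          simp only [Nat.zero_mod] at this
          exact Nat.dvd_of_mod_eq_zero this.symm
        · omega
    · rw [hfo i hi, hfo j hj]
      rw [qhat_adj, ghat_adj, apexPath_adj]
      constructor
      · rintro (⟨-, hd⟩ | ⟨hne, -⟩)
        · rw [Nat.dist_self] at hd; omega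
        · exact absurd rfl hne
      · rintro (⟨h1, -, -⟩ | ⟨-, h2, -⟩ | ⟨-, h2, -⟩) <;> omega
  exact ⟨⟨⟨f, hinj⟩, fun {i j} => key i j⟩⟩

lemma apexPath_not_embeds {k k' : ℕ} (hk : 2 ≤ k) (hkk : k < k') :
    ¬ Nonempty (apexPath k ↪g Qhat k') := by
  rintro ⟨f⟩
  obtain ⟨L, hL⟩ : ∃ L : ℕ, L = 2*k+10 := ⟨_, rfl⟩
  have hk' : 2 ≤ k' := by omega
  -- the path part
  set p : Fin (L+1) → ℕ × ℕ := fun m => (f ⟨m.val, by omega⟩ : ↥Qset).val with hp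
  have hpinj : Function.Injective p := by
    intro i j h
    have := f.injective (Subtype.ext h)
    exact Fin.ext (by simpa [Fin.ext_iff] using this)
  have hpadj : ∀ i j, (Ghat k').Adj (p i) (p j) ↔ Nat.dist i.val j.val = 1 := by
    intro i j
    have hi := i.isLt; have hj := j.isLt
    have h1 : (Ghat k').Adj (p i) (p j) ↔
        (apexPath k).Adj ⟨i.val, by omega⟩ ⟨j.val, by omega⟩ := by
      rw [hp]
      exact f.map_rel_iff
    rw [h1, apexPath_adj]
    simp only [Fin.val_mk]
    constructor
    · rintro (⟨-, -, hd⟩ | ⟨h1, -, -⟩ | ⟨h1, -, -⟩)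
      · exact hd
      · omega
      · omega
    · intro hd
      exact Or.inl ⟨by omega, by omega, hd⟩
  obtain ⟨hC, hY⟩ := path_structure_fin hk' (by omega) p hpinj hpadj
  -- the apex
  set w : ℕ × ℕ := (f ⟨2*k+11, by omega⟩ : ↥Qset).val with hw
  -- adjacency between apex and path vertices
  have hwadj : ∀ (t : ℕ) (ht : t ≤ L),
      (Ghat k').Adj w (p ⟨t, by omega⟩) ↔ ¬ k ∣ t := by
    intro t ht
    have h1 : (Ghat k').Adj w (p ⟨t, by omega⟩) ↔
        (apexPath k).Adj ⟨2*k+11, by omega⟩ ⟨t, by omega⟩ := by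
      rw [hw, hp]
      exact f.map_rel_iff
    rw [h1, apexPath_adj]
    simp only [Fin.val_mk]
    constructor
    · rintro (⟨h1, -, -⟩ | ⟨-, -, hnd⟩ | ⟨h1, -, -⟩)
      · omega
      · exact hnd
      · omega
    · intro hnd
      exact Or.inr (Or.inl ⟨trivial, by omega, hnd⟩)
  by_cases hcol : w.1 = (p 0).1
  · -- same column as path: apex adjacent to 1, k+1, 2k+1, all within dist 1 impossible
    have hnb : ∀ (t : ℕ) (ht : t ≤ L), ¬ k ∣ t → Nat.dist w.2 ((p ⟨t, by omega⟩).2) = 1 := by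
      intro t ht hnd
      have := (hwadj t ht).mpr hnd
      rw [ghat_adj] at this
      rcases this with ⟨-, hd⟩ | ⟨hne, -⟩
      · exact hd
      · exact absurd (hcol.trans (hC ⟨t, by omega⟩).symm) hne
    have hd1 := hnb 1 (by omega) (by intro h; have := Nat.le_of_dvd (by omega) h; omega)
    have hd2 := hnb (k+1) (by omega) (by
      intro h
      have : k ∣ 1 := (Nat.dvd_add_right (dvd_refl k)).mp h
      have := Nat.le_of_dvd (by omega) this; omega)
    have hd3 := hnb (2*k+1) (by omega) (by
      intro h
      have : k ∣ 1 := (Nat.dvd_add_right (dvd_mul_left k 2)).mp h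
      have := Nat.le_of_dvd (by omega) this; omega)
    rcases hY with h | h
    · have e1 := h ⟨1, by omega⟩
      have e2 := h ⟨k+1, by omega⟩
      have e3 := h ⟨2*k+1, by omega⟩
      simp only at e1 e2 e3
      rw [e1] at hd1; rw [e2] at hd2; rw [e3] at hd3
      simp only [Nat.dist] at hd1 hd2 hd3
      omega
    · have e1 := h ⟨1, by omega⟩
      have e2 := h ⟨k+1, by omega⟩
      have e3 := h ⟨2*k+1, by omega⟩
      simp only at e1 e2 e3
      simp only [Nat.dist] at hd1 hd2 hd3
      omega
  · -- different column: apex non-adjacent to 0 and k forces k' ∣ k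
    have hnn : ∀ (t : ℕ) (ht : t ≤ L), k ∣ t → w.2 ≡ (p ⟨t, by omega⟩).2 [MOD k'] := by
      intro t ht hdvd
      have hna : ¬ (Ghat k').Adj w (p ⟨t, by omega⟩) := by
        rw [hwadj t ht]; simpa using hdvd
      rw [ghat_adj] at hna
      push_neg at hna
      have hcne : w.1 ≠ (p ⟨t, by omega⟩).1 := by
        rw [hC ⟨t, by omega⟩]; exact hcol
      exact hna.2 hcne
    have h0 := hnn 0 (by omega) (dvd_zero k)
    have hk2 := hnn k (by omega) dvd_rfl
    have hmeq : (p ⟨0, by omega⟩).2 ≡ (p ⟨k, by omega⟩).2 [MOD k'] := h0.symm.trans hk2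
    have hdist : Nat.dist ((p ⟨0, by omega⟩).2) ((p ⟨k, by omega⟩).2) = k := by
      rcases hY with h | h
      · have e0 := h ⟨0, by omega⟩
        have ek := h ⟨k, by omega⟩
        simp only at e0 ek
        simp only [Nat.dist]
        omega
      · have e0 := h ⟨0, by omega⟩
        have ek := h ⟨k, by omega⟩
        simp only at e0 ek
        simp only [Nat.dist]
        omega
    -- k' divides the distance k, contradiction
    set a := (p ⟨0, by omega⟩).2
    set b := (p ⟨k, by omega⟩).2
    have : k' ∣ k := by
      rcases le_total a b with hab | hab
      · have := (Nat.modEq_iff_dvd' hab).mp hmeq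
        have hba : b - a = k := by simp [Nat.dist] at hdist; omega
        rwa [hba] at this
      · have := (Nat.modEq_iff_dvd' hab).mp hmeq.symm
        have hba : a - b = k := by simp [Nat.dist] at hdist; omega
        rwa [hba] at this
    have := Nat.le_of_dvd (by omega) this
    omega

theorem Qhat_pathMinimal_and_incomparable_ages :
    (∀ k : ℕ, 2 ≤ k → PathMinimal (Qhat k)) ∧
      ∀ k k' : ℕ, 2 ≤ k → k < k' →
        ¬ AgeSubset (Qhat k) (Qhat k') ∧ ¬ AgeSubset (Qhat k') (Qhat k) := by
  constructor
  · intro k hk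
    exact ⟨hasUnboundedPaths_Qhat k hk,
      fun A hU => embed_of_intervals hk A (intervals_of_unbounded hk A hU)⟩
  · intro k k' hk hkk
    constructor
    · intro h
      exact apexPath_not_embeds hk hkk (h _ (apexPath k) (apexPath_embeds hk))
    · intro h
      exact top_not_embeds hk (h _ ⊤ (top_embeds hk hkk))
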